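/- Let L be a down-closed set of ipomsets of finite width w = wid(L) such that L contains no identity ipomset. Then for every n ≥ 2w + 1, every element Q of L^n (the n-fold gluing composition of L with itself, down-closed) is separated, i.e., Q \ (S_Q ∪ T_Q) ≠ ∅. -/
import Mathlib


attribute [local instance] Classical.propDecidable

/-- An ipomset (up to isomorphism) represented on a carrier `carrier ⊆ ℕ`:
a strict precedence order `lt`, labels, and interfaces `S`, `T ⊆ carrier`
consisting of minimal resp. maximal elements. -/
structure NIP (Λ : Type) where
  carrier : Finset ℕ
  lt : ℕ → ℕ → Prop
  lab : ℕ → Λ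
  S : Finset ℕ
  T : Finset ℕ
  lt_mem : ∀ x y, lt x y → x ∈ carrier ∧ y ∈ carrier
  lt_irrefl : ∀ x, ¬ lt x x
  lt_trans : ∀ x y z, lt x y → lt y z → lt x z
  S_sub : S ⊆ carrier
  T_sub : T ⊆ carrier
  S_min : ∀ s ∈ S, ∀ x, ¬ lt x s
  T_max : ∀ t ∈ T, ∀ x, ¬ lt t x

/-- Width: maximal cardinality of an antichain for the precedence order. -/
noncomputable def NIP.width {Λ : Type} (P : NIP Λ) : ℕ :=
  (P.carrier.powerset.filter (fun s => ∀ x ∈ s, ∀ y ∈ s, ¬ P.lt x y)).sup Finset.card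

/-- Subsumption `P ⊑ Q`: a bijection of carriers preserving interfaces and
labels and reflecting precedence. -/
def Subsm {Λ : Type} (P Q : NIP Λ) : Prop :=
  ∃ f : ℕ → ℕ, Set.BijOn f ↑P.carrier ↑Q.carrier ∧
    f '' ↑P.S = ↑Q.S ∧ f '' ↑P.T = ↑Q.T ∧
    (∀ x ∈ P.carrier, Q.lab (f x) = P.lab x) ∧
    (∀ x ∈ P.carrier, ∀ y ∈ P.carrier, Q.lt (f x) (f y) → P.lt x y)

/-- `R` is a gluing composition `P * Q`: carriers identified exactly along
`T_P = S_Q` (label-preservingly), precedence generated by those of `P`, `Q`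
plus `x < y` for `x ∈ P \ T_P`, `y ∈ Q \ S_Q`; `S_R = S_P`, `T_R = T_Q`. -/
def IsGluing {Λ : Type} (P Q R : NIP Λ) : Prop :=
  ∃ i j : ℕ → ℕ,
    Set.InjOn i ↑P.carrier ∧ Set.InjOn j ↑Q.carrier ∧
    (∀ a ∈ P.carrier, i a ∈ R.carrier) ∧ (∀ b ∈ Q.carrier, j b ∈ R.carrier) ∧
    (∀ c ∈ R.carrier, (∃ a ∈ P.carrier, i a = c) ∨ (∃ b ∈ Q.carrier, j b = c)) ∧
    (∀ a ∈ P.carrier, ∀ b ∈ Q.carrier, i a = j b → a ∈ P.T ∧ b ∈ Q.S) ∧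
    (∀ a ∈ P.T, ∃ b ∈ Q.S, i a = j b) ∧
    (∀ b ∈ Q.S, ∃ a ∈ P.T, i a = j b) ∧
    (∀ a ∈ P.carrier, ∀ b ∈ Q.carrier, i a = j b → P.lab a = Q.lab b) ∧
    (∀ x y, R.lt x y ↔
      ((∃ a ∈ P.carrier, ∃ a' ∈ P.carrier, x = i a ∧ y = i a' ∧ P.lt a a') ∨
       (∃ b ∈ Q.carrier, ∃ b' ∈ Q.carrier, x = j b ∧ y = j b' ∧ Q.lt b b') ∨
       (∃ a ∈ P.carrier, ∃ b ∈ Q.carrier, x = i a ∧ y = j b ∧ a ∉ P.T ∧ b ∉ Q.S))) ∧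
    ↑R.S = i '' ↑P.S ∧ ↑R.T = j '' ↑Q.T ∧
    (∀ a ∈ P.carrier, R.lab (i a) = P.lab a) ∧ (∀ b ∈ Q.carrier, R.lab (j b) = Q.lab b)

/-- Down-closure of a set of ipomsets under subsumption. -/
def down {Λ : Type} (A : Set (NIP Λ)) : Set (NIP Λ) := {P | ∃ Q ∈ A, Subsm P Q}

/-- Gluing composition of languages:
`L * M = {P * Q : P ∈ L, Q ∈ M, T_P = S_Q}↓`. -/
def comp {Λ : Type} (L M : Set (NIP Λ)) : Set (NIP Λ) :=
  down {R | ∃ P ∈ L, ∃ Q ∈ M, IsGluing P Q R}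

/-- `pw L n` is `L^n`: `L^1 = L`, `L^{n+1} = L * L^n`. -/
def pw {Λ : Type} (L : Set (NIP Λ)) : ℕ → Set (NIP Λ)
  | 0 => ∅
  | 1 => L
  | n+2 => comp L (pw L (n+1))

/-- Identity ipomsets: `S = P = T`. -/
def IsId {Λ : Type} (P : NIP Λ) : Prop := P.S = P.carrier ∧ P.T = P.carrier

/-- Separated ipomsets: some element lies in no interface. -/
def Separated {Λ : Type} (P : NIP Λ) : Prop := ∃ x ∈ P.carrier, x ∉ P.S ∧ x ∉ P.T

/-- Interval ipomsets: those admitting an interval representation. -/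
def IsInterval {Λ : Type} (P : NIP Λ) : Prop :=
  ∃ b e : ℕ → ℝ, (∀ x ∈ P.carrier, b x ≤ e x) ∧
    (∀ x ∈ P.carrier, ∀ y ∈ P.carrier, (P.lt x y ↔ e x < b y))
lemma antichain_card_le_width {Λ : Type} (P : NIP Λ) (A : Finset ℕ)
    (hA : A ⊆ P.carrier) (hanti : ∀ x ∈ A, ∀ y ∈ A, ¬ P.lt x y) :
    A.card ≤ P.width := by
  apply Finset.le_sup
  simp only [Finset.mem_filter, Finset.mem_powerset]
  exact ⟨hA, hanti⟩

lemma S_card_le_width {Λ : Type} (P : NIP Λ) : P.S.card ≤ P.width :=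
  antichain_card_le_width P P.S P.S_sub (fun x _ y hy => P.S_min y hy x)

lemma T_card_le_width {Λ : Type} (P : NIP Λ) : P.T.card ≤ P.width :=
  antichain_card_le_width P P.T P.T_sub (fun x hx y _ => P.T_max x hx y)

lemma subsm_cards {Λ : Type} {P Q : NIP Λ} (h : Subsm P Q) :
    P.carrier.card = Q.carrier.card ∧ P.S.card = Q.S.card ∧
    P.T.card = Q.T.card ∧ P.width ≤ Q.width := by
  obtain ⟨f, hbij, hS, hT, _, hlt⟩ := h
  have hinj := hbij.injOn
  have hcard : ∀ (A : Finset ℕ) (B : Finset ℕ), ↑A ⊆ (↑P.carrier : Set ℕ) →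
      f '' ↑A = ↑B → A.card = B.card := by
    intro A B hAsub himg
    have h1 : (f '' (↑A : Set ℕ)).ncard = (↑A : Set ℕ).ncard :=
      Set.ncard_image_of_injOn (hinj.mono hAsub)
    rw [himg] at h1
    simpa [Set.ncard_coe_finset] using h1.symm
  refine ⟨hcard _ _ (by rfl) hbij.image_eq,
    hcard _ _ (Finset.coe_subset.mpr P.S_sub) hS,
    hcard _ _ (Finset.coe_subset.mpr P.T_sub) hT, ?_⟩
  apply Finset.sup_le
  intro s hs
  simp only [Finset.mem_filter, Finset.mem_powerset] at hs
  obtain ⟨hsub, hanti⟩ := hs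
  have hscoe : (↑s : Set ℕ) ⊆ ↑P.carrier := Finset.coe_subset.mpr hsub
  have h1 : (s.image f).card = s.card := Finset.card_image_of_injOn (hinj.mono hscoe)
  rw [← h1]
  apply antichain_card_le_width Q
  · intro y hy
    obtain ⟨x, hx, rfl⟩ := Finset.mem_image.mp hy
    exact_mod_cast hbij.mapsTo (by exact_mod_cast hsub hx)
  · intro x' hx' y' hy' hQlt
    obtain ⟨x, hx, rfl⟩ := Finset.mem_image.mp hx'
    obtain ⟨y, hy, rfl⟩ := Finset.mem_image.mp hy'
    exact hanti x hx y hy (hlt x (hsub hx) y (hsub hy) hQlt)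

lemma gluing_cards {Λ : Type} {P Q R : NIP Λ} (h : IsGluing P Q R) :
    R.carrier.card + P.T.card = P.carrier.card + Q.carrier.card ∧
    R.S.card = P.S.card ∧ R.T.card = Q.T.card ∧ P.T.card = Q.S.card := by
  classical
  obtain ⟨i, j, hiinj, hjinj, hiR, hjR, hcov, hident, hTS, hST, _, _, hRS, hRT, _, _⟩ := h
  set A := P.carrier.image i with hA
  set B := Q.carrier.image j with hB
  have hAcard : A.card = P.carrier.card :=
    Finset.card_image_of_injOn (by exact_mod_cast hiinj)
  have hBcard : B.card = Q.carrier.card :=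
    Finset.card_image_of_injOn (by exact_mod_cast hjinj)
  have hunion : A ∪ B = R.carrier := by
    ext c
    simp only [Finset.mem_union, hA, hB, Finset.mem_image]
    constructor
    · rintro (⟨a, ha, rfl⟩ | ⟨b, hb, rfl⟩)
      · exact hiR a ha
      · exact hjR b hb
    · intro hc
      rcases hcov c hc with ⟨a, ha, rfl⟩ | ⟨b, hb, rfl⟩
      · exact Or.inl ⟨a, ha, rfl⟩
      · exact Or.inr ⟨b, hb, rfl⟩
  have hinterT : A ∩ B = P.T.image i := by
    ext c
    simp only [Finset.mem_inter, hA, hB, Finset.mem_image]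
    constructor
    · rintro ⟨⟨a, ha, rfl⟩, ⟨b, hb, heq⟩⟩
      exact ⟨a, (hident a ha b hb heq.symm).1, rfl⟩
    · rintro ⟨a, ha, rfl⟩
      obtain ⟨b, hb, heq⟩ := hTS a ha
      exact ⟨⟨a, P.T_sub ha, rfl⟩, ⟨b, Q.S_sub hb, heq.symm⟩⟩
  have hinterS : A ∩ B = Q.S.image j := by
    ext c
    simp only [Finset.mem_inter, hA, hB, Finset.mem_image]
    constructor
    · rintro ⟨⟨a, ha, rfl⟩, ⟨b, hb, heq⟩⟩
      exact ⟨b, (hident a ha b hb heq.symm).2, heq.symm ▸ rfl⟩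
    · rintro ⟨b, hb, rfl⟩
      obtain ⟨a, ha, heq⟩ := hST b hb
      exact ⟨⟨a, P.T_sub ha, heq⟩, ⟨b, Q.S_sub hb, rfl⟩⟩
  have hTcard : (P.T.image i).card = P.T.card :=
    Finset.card_image_of_injOn ((hiinj.mono (Finset.coe_subset.mpr P.T_sub)))
  have hScard : (Q.S.image j).card = Q.S.card :=
    Finset.card_image_of_injOn ((hjinj.mono (Finset.coe_subset.mpr Q.S_sub)))
  have hTS' : P.T.card = Q.S.card := by rw [← hTcard, ← hinterT, hinterS, hScard]
  have hmain : R.carrier.card + P.T.card = P.carrier.card + Q.carrier.card := by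
    have := Finset.card_union_add_card_inter A B
    rw [hunion, hinterT, hTcard, hAcard, hBcard] at this
    exact this
  have hcardeq : ∀ (f : ℕ → ℕ) (X Y : Finset ℕ), Set.InjOn f ↑X → (↑Y : Set ℕ) = f '' ↑X →
      Y.card = X.card := by
    intro f X Y hinj himg
    have : (↑Y : Set ℕ).ncard = (f '' ↑X).ncard := by rw [himg]
    rwa [Set.ncard_image_of_injOn hinj, Set.ncard_coe_finset, Set.ncard_coe_finset] at this
  exact ⟨hmain,
    hcardeq i P.S R.S (hiinj.mono (Finset.coe_subset.mpr P.S_sub)) hRS,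
    hcardeq j Q.T R.T (hjinj.mono (Finset.coe_subset.mpr Q.T_sub)) hRT, hTS'⟩

lemma gluing_width {Λ : Type} {P Q R : NIP Λ} (h : IsGluing P Q R) :
    R.width ≤ max P.width Q.width := by
  classical
  obtain ⟨i, j, hiinj, hjinj, hiR, hjR, hcov, hident, hTS, hST, _, hltR, _, _, _, _⟩ := h
  apply Finset.sup_le
  intro A hA
  simp only [Finset.mem_filter, Finset.mem_powerset] at hA
  obtain ⟨hsub, hanti⟩ := hA
  by_cases hcase : ∀ c ∈ A, ∃ a ∈ P.carrier, i a = c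
  · -- all of A in image of i
    set A' := P.carrier.filter (fun a => i a ∈ A) with hA'
    have himg : A'.image i = A := by
      ext c
      simp only [Finset.mem_image, hA', Finset.mem_filter]
      constructor
      · rintro ⟨a, ⟨_, hia⟩, rfl⟩; exact hia
      · intro hc; obtain ⟨a, ha, rfl⟩ := hcase c hc; exact ⟨a, ⟨ha, hc⟩, rfl⟩
    have hcard : A'.card = A.card := by
      rw [← himg]
      exact (Finset.card_image_of_injOn (hiinj.mono (by
        intro x hx; simp only [hA', Finset.coe_filter, Set.mem_setOf_eq] at hx
        exact hx.1))).symm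
    rw [← hcard]
    refine le_max_of_le_left (antichain_card_le_width P A' (Finset.filter_subset _ _) ?_)
    intro a ha a' ha' hPlt
    simp only [hA', Finset.mem_filter] at ha ha'
    exact hanti (i a) ha.2 (i a') ha'.2
      ((hltR _ _).mpr (Or.inl ⟨a, ha.1, a', ha'.1, rfl, rfl, hPlt⟩))
  · push_neg at hcase
    obtain ⟨c₀, hc₀A, hc₀⟩ := hcase
    obtain ⟨b₀, hb₀, hc₀eq⟩ : ∃ b ∈ Q.carrier, j b = c₀ := by
      rcases hcov c₀ (hsub hc₀A) with ⟨a, ha, heq⟩ | hb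
      · exact absurd heq (hc₀ a ha)
      · exact hb
    have hb₀S : b₀ ∉ Q.S := by
      intro hb
      obtain ⟨a, ha, heq⟩ := hST b₀ hb
      exact hc₀ a (P.T_sub ha) (heq.trans hc₀eq)
    have hall : ∀ c ∈ A, ∃ b ∈ Q.carrier, j b = c := by
      intro c hc
      rcases hcov c (hsub hc) with ⟨a, ha, rfl⟩ | hb
      · by_cases haT : a ∈ P.T
        · obtain ⟨b, hb, heq⟩ := hTS a haT
          exact ⟨b, Q.S_sub hb, heq.symm⟩
        · exfalso
          exact hanti (i a) hc c₀ hc₀A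
            ((hltR _ _).mpr (Or.inr (Or.inr ⟨a, ha, b₀, hb₀, rfl, hc₀eq.symm, haT, hb₀S⟩)))
      · exact hb
    set A' := Q.carrier.filter (fun b => j b ∈ A) with hA'
    have himg : A'.image j = A := by
      ext c
      simp only [Finset.mem_image, hA', Finset.mem_filter]
      constructor
      · rintro ⟨b, ⟨_, hjb⟩, rfl⟩; exact hjb
      · intro hc; obtain ⟨b, hb, rfl⟩ := hall c hc; exact ⟨b, ⟨hb, hc⟩, rfl⟩
    have hcard : A'.card = A.card := by
      rw [← himg]
      exact (Finset.card_image_of_injOn (hjinj.mono (by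
        intro x hx; simp only [hA', Finset.coe_filter, Set.mem_setOf_eq] at hx
        exact hx.1))).symm
    rw [← hcard]
    refine le_max_of_le_right (antichain_card_le_width Q A' (Finset.filter_subset _ _) ?_)
    intro b hb b' hb' hQlt
    simp only [hA', Finset.mem_filter] at hb hb'
    exact hanti (j b) hb.2 (j b') hb'.2
      ((hltR _ _).mpr (Or.inr (Or.inl ⟨b, hb.1, b', hb'.1, rfl, rfl, hQlt⟩)))

lemma size_ge_one {Λ : Type} (P : NIP Λ) (h : ¬ IsId P) :
    1 + P.S.card + P.T.card ≤ 2 * P.carrier.card := by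
  have hS : P.S.card ≤ P.carrier.card := Finset.card_le_card P.S_sub
  have hT : P.T.card ≤ P.carrier.card := Finset.card_le_card P.T_sub
  rw [IsId, not_and_or] at h
  rcases h with h | h
  · have : P.S.card < P.carrier.card :=
      Finset.card_lt_card (Finset.ssubset_iff_subset_ne.mpr ⟨P.S_sub, h⟩)
    omega
  · have : P.T.card < P.carrier.card :=
      Finset.card_lt_card (Finset.ssubset_iff_subset_ne.mpr ⟨P.T_sub, h⟩)
    omega

lemma pw_inv {Λ : Type} (L : Set (NIP Λ)) (w : ℕ)
    (hw : ∀ P ∈ L, P.width ≤ w) (hid : ∀ P ∈ L, ¬ IsId P) :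
    ∀ n, ∀ Q ∈ pw L (n+1),
      Q.width ≤ w ∧ (n+1) + Q.S.card + Q.T.card ≤ 2 * Q.carrier.card := by
  intro n
  induction n with
  | zero =>
    intro Q hQ
    have hQL : Q ∈ L := hQ
    exact ⟨hw Q hQL, size_ge_one Q (hid Q hQL)⟩
  | succ n ih =>
    intro Q hQ
    have hQ' : Q ∈ comp L (pw L (n+1)) := hQ
    obtain ⟨R, ⟨P, hP, Q', hQ'', hglue⟩, hsub⟩ := hQ'
    obtain ⟨hc, hs, ht, hwid⟩ := subsm_cards hsub
    obtain ⟨hgc, hgs, hgt, hgts⟩ := gluing_cards hglue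
    have hgw := gluing_width hglue
    obtain ⟨hw', hsz'⟩ := ih Q' hQ''
    have hwP := hw P hP
    have hszP := size_ge_one P (hid P hP)
    constructor
    · calc Q.width ≤ R.width := hwid
        _ ≤ max P.width Q'.width := hgw
        _ ≤ w := max_le hwP hw'
    · omega

/-- If `L` is a down-closed language of width at most `w` containing no
identity ipomset, then for every `n ≥ 2w + 1` every element of `L^n` is
separated. -/
theorem pw_separated {Λ : Type} (L : Set (NIP Λ)) (w : ℕ)
    (hdc : ∀ P Q : NIP Λ, Subsm P Q → Q ∈ L → P ∈ L)
    (hw : ∀ P ∈ L, P.width ≤ w)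
    (hid : ∀ P ∈ L, ¬ IsId P) :
    ∀ n, 2 * w + 1 ≤ n → ∀ Q ∈ pw L n, Separated Q := by
  intro n hn Q hQ
  obtain ⟨m, rfl⟩ : ∃ m, n = m + 1 := ⟨n - 1, by omega⟩
  obtain ⟨hwid, hsz⟩ := pw_inv L w hw hid m Q hQ
  have hS := S_card_le_width Q
  have hT := T_card_le_width Q
  by_contra hsep
  rw [Separated] at hsep
  push_neg at hsep
  have hcov : Q.carrier ⊆ Q.S ∪ Q.T := by
    intro x hx
    by_cases hxS : x ∈ Q.S
    · exact Finset.mem_union_left _ hxS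
    · exact Finset.mem_union_right _ (hsep x hx hxS)
  have : Q.carrier.card ≤ Q.S.card + Q.T.card :=
    le_trans (Finset.card_le_card hcov) (Finset.card_union_le _ _)
  omega
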